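/- arXiv:1812.11380 — 3 statements merged into one kernel-verified Lean document; each statement's English description precedes it below -/
import Mathlib

section
/- Let (a,b) be a triclinic pair of real symmetric 3×3 matrices such that a is orthotropic. Then the six matrices Id, a, b, a², (ab)ˢ = ab + ba, and [a,b]² = (ab − ba)² form a basis of the 6-dimensional real vector space of symmetric 3×3 matrices. -/
open Matrix BigOperators

noncomputable section

abbrev M3 := Matrix (Fin 3) (Fin 3) ℝ

/-- `a` and `b` have no common eigenvector: the pair `(a,b)` is triclinic. -/
def Triclinic (a b : M3) : Prop :=
  ¬ ∃ v : Fin 3 → ℝ, v ≠ 0 ∧ (∃ μ : ℝ, a.mulVec v = μ • v) ∧ (∃ ν : ℝ, b.mulVec v = ν • v)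

/-- `a` has three pairwise distinct eigenvalues. -/
def Orthotropic (a : M3) : Prop :=
  ∃ l1 l2 l3 : ℝ, l1 ≠ l2 ∧ l1 ≠ l3 ∧ l2 ≠ l3 ∧
    (∃ v : Fin 3 → ℝ, v ≠ 0 ∧ a.mulVec v = l1 • v) ∧
    (∃ v : Fin 3 → ℝ, v ≠ 0 ∧ a.mulVec v = l2 • v) ∧
    (∃ v : Fin 3 → ℝ, v ≠ 0 ∧ a.mulVec v = l3 • v)



namespace Stmt9Aux

def fam (a b : M3) : Fin 6 → M3 := ![1, a, b, a ^ 2, a * b + b * a, (a * b - b * a) ^ 2]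

lemma isSymm_of (a b : M3) (ha : a.IsSymm) (hb : b.IsSymm) :
    (1 : M3).IsSymm ∧ (a ^ 2).IsSymm ∧ (a * b + b * a).IsSymm ∧ ((a * b - b * a) ^ 2).IsSymm := by
  have ha' : aᵀ = a := ha
  have hb' : bᵀ = b := hb
  refine ⟨transpose_one, ?_, ?_, ?_⟩
  · show _ᵀ = _
    rw [pow_two, transpose_mul, ha']
  · show _ᵀ = _
    rw [transpose_add, transpose_mul, transpose_mul, ha', hb', add_comm]
  · show _ᵀ = _
    rw [pow_two, transpose_mul, transpose_sub, transpose_mul, transpose_mul, ha', hb']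
    noncomm_ring

lemma fam_symm (a b : M3) (ha : a.IsSymm) (hb : b.IsSymm) (j : Fin 6) : (fam a b j).IsSymm := by
  obtain ⟨h1, h2, h3, h4⟩ := isSymm_of a b ha hb
  fin_cases j
  · exact h1
  · exact ha
  · exact hb
  · exact h2
  · exact h3
  · exact h4

end Stmt9Aux

namespace Stmt9Aux

/-- columns: 1, a, a², b, ab+ba, (ab-ba)² where a = diagonal d -/
def famc (d : Fin 3 → ℝ) (b : M3) : Fin 6 → M3
  | 0 => 1
  | 1 => diagonal d
  | 2 => (diagonal d) ^ 2
  | 3 => b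
  | 4 => diagonal d * b + b * diagonal d
  | 5 => (diagonal d * b - b * diagonal d) ^ 2

def Amat (d : Fin 3 → ℝ) : M3 := !![1, d 0, d 0 ^ 2; 1, d 1, d 1 ^ 2; 1, d 2, d 2 ^ 2]

def Bmat (d : Fin 3 → ℝ) (b : M3) : M3 :=
  !![b 0 0, 2 * d 0 * b 0 0, -((d 0 - d 1)^2 * b 0 1^2) - (d 0 - d 2)^2 * b 0 2^2;
     b 1 1, 2 * d 1 * b 1 1, -((d 0 - d 1)^2 * b 0 1^2) - (d 1 - d 2)^2 * b 1 2^2;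
     b 2 2, 2 * d 2 * b 2 2, -((d 0 - d 2)^2 * b 0 2^2) - (d 1 - d 2)^2 * b 1 2^2]

def Wmat (d : Fin 3 → ℝ) (b : M3) : M3 :=
  !![b 0 1, (d 0 + d 1) * b 0 1, (d 0 - d 2) * (d 2 - d 1) * b 0 2 * b 1 2;
     b 0 2, (d 0 + d 2) * b 0 2, (d 0 - d 1) * (d 1 - d 2) * b 0 1 * b 1 2;
     b 1 2, (d 1 + d 2) * b 1 2, (d 1 - d 0) * (d 0 - d 2) * b 0 1 * b 0 2]

def Mmat (d : Fin 3 → ℝ) (b : M3) : Matrix (Fin 6) (Fin 6) ℝ :=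
  (fromBlocks (Amat d) (Bmat d b) 0 (Wmat d b)).submatrix (finSumFinEquiv : Fin 3 ⊕ Fin 3 ≃ Fin 6).symm (finSumFinEquiv : Fin 3 ⊕ Fin 3 ≃ Fin 6).symm

def R1 : Fin 6 → Fin 3
  | 0 => 0 | 1 => 1 | 2 => 2 | 3 => 0 | 4 => 0 | 5 => 1
def R2 : Fin 6 → Fin 3
  | 0 => 0 | 1 => 1 | 2 => 2 | 3 => 1 | 4 => 2 | 5 => 2

set_option maxHeartbeats 1600000 in
lemma Mmat_entry (d : Fin 3 → ℝ) (b : M3) (hb : b.IsSymm) (i j : Fin 6) :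
    Mmat d b i j = famc d b j (R1 i) (R2 i) := by
  have hb10 : b 1 0 = b 0 1 := hb.apply 0 1
  have hb20 : b 2 0 = b 0 2 := hb.apply 0 2
  have hb21 : b 2 1 = b 1 2 := hb.apply 1 2
  have e0 : (finSumFinEquiv : Fin 3 ⊕ Fin 3 ≃ Fin 6).symm 0 = Sum.inl 0 := rfl
  have e1 : (finSumFinEquiv : Fin 3 ⊕ Fin 3 ≃ Fin 6).symm 1 = Sum.inl 1 := rfl
  have e2 : (finSumFinEquiv : Fin 3 ⊕ Fin 3 ≃ Fin 6).symm 2 = Sum.inl 2 := rfl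
  have e3 : (finSumFinEquiv : Fin 3 ⊕ Fin 3 ≃ Fin 6).symm 3 = Sum.inr 0 := rfl
  have e4 : (finSumFinEquiv : Fin 3 ⊕ Fin 3 ≃ Fin 6).symm 4 = Sum.inr 1 := rfl
  have e5 : (finSumFinEquiv : Fin 3 ⊕ Fin 3 ≃ Fin 6).symm 5 = Sum.inr 2 := rfl
  fin_cases i <;> fin_cases j <;>
    simp [Mmat, Amat, Bmat, Wmat, famc, R1, R2, Matrix.mul_apply, Fin.sum_univ_three,
      Matrix.diagonal_apply, Matrix.one_apply, pow_two, Matrix.submatrix_apply,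
      e0, e1, e2, e3, e4, e5, Matrix.fromBlocks_apply₁₁, Matrix.fromBlocks_apply₁₂,
      Matrix.fromBlocks_apply₂₁, Matrix.fromBlocks_apply₂₂,
      Matrix.vecHead, Matrix.vecTail, hb10, hb20, hb21] <;> ring

end Stmt9Aux

namespace Stmt9Aux

lemma det_Mmat (d : Fin 3 → ℝ) (b : M3)
    (h01 : d 0 ≠ d 1) (h02 : d 0 ≠ d 2) (h12 : d 1 ≠ d 2)
    (hpq : ¬(b 0 1 = 0 ∧ b 0 2 = 0)) (hpr : ¬(b 0 1 = 0 ∧ b 1 2 = 0))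
    (hqr : ¬(b 0 2 = 0 ∧ b 1 2 = 0)) : (Mmat d b).det ≠ 0 := by
  have hS : b 0 1 ^ 2 * b 0 2 ^ 2 + b 0 1 ^ 2 * b 1 2 ^ 2 + b 0 2 ^ 2 * b 1 2 ^ 2 ≠ 0 := by
    intro hS0
    have h1 : b 0 1 * b 0 2 = 0 := by nlinarith [sq_nonneg (b 0 1 * b 0 2), sq_nonneg (b 0 1 * b 1 2), sq_nonneg (b 0 2 * b 1 2)]
    have h2 : b 0 1 * b 1 2 = 0 := by nlinarith [sq_nonneg (b 0 1 * b 0 2), sq_nonneg (b 0 1 * b 1 2), sq_nonneg (b 0 2 * b 1 2)]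
    have h3 : b 0 2 * b 1 2 = 0 := by nlinarith [sq_nonneg (b 0 1 * b 0 2), sq_nonneg (b 0 1 * b 1 2), sq_nonneg (b 0 2 * b 1 2)]
    rcases mul_eq_zero.mp h1 with hp | hq
    · rcases mul_eq_zero.mp h3 with hq | hr
      · exact hpq ⟨hp, hq⟩
      · exact hpr ⟨hp, hr⟩
    · rcases mul_eq_zero.mp h2 with hp | hr
      · exact hpq ⟨hp, hq⟩
      · exact hqr ⟨hq, hr⟩
  have hdet : (Mmat d b).det = (Amat d).det * (Wmat d b).det := by
    rw [Mmat, det_submatrix_equiv_self, det_fromBlocks_zero₂₁]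
  have hA : (Amat d).det = (d 1 - d 0) * ((d 2 - d 0) * (d 2 - d 1)) := by
    simp [Amat, Matrix.det_fin_three, Matrix.vecHead, Matrix.vecTail]; ring
  have hW : (Wmat d b).det = -((d 0 - d 1) * (d 1 - d 2) * (d 2 - d 0)) *
      (b 0 1 ^ 2 * b 0 2 ^ 2 + b 0 1 ^ 2 * b 1 2 ^ 2 + b 0 2 ^ 2 * b 1 2 ^ 2) := by
    simp [Wmat, Matrix.det_fin_three, Matrix.vecHead, Matrix.vecTail]; ring
  rw [hdet, hA, hW]
  apply mul_ne_zero
  · exact mul_ne_zero (sub_ne_zero.mpr h01.symm)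
      (mul_ne_zero (sub_ne_zero.mpr h02.symm) (sub_ne_zero.mpr h12.symm))
  · exact mul_ne_zero (neg_ne_zero.mpr (mul_ne_zero (mul_ne_zero (sub_ne_zero.mpr h01)
      (sub_ne_zero.mpr h12)) (sub_ne_zero.mpr (Ne.symm h02)))) hS

end Stmt9Aux

namespace Stmt9Aux

lemma famc_eq (d : Fin 3 → ℝ) (b : M3) (j : Fin 6) :
    famc d b j = fam (diagonal d) b (Equiv.swap (2 : Fin 6) 3 j) := by
  fin_cases j <;> rfl

lemma core (d : Fin 3 → ℝ) (b : M3) (hb : b.IsSymm)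
    (h01 : d 0 ≠ d 1) (h02 : d 0 ≠ d 2) (h12 : d 1 ≠ d 2)
    (hpq : ¬(b 0 1 = 0 ∧ b 0 2 = 0)) (hpr : ¬(b 0 1 = 0 ∧ b 1 2 = 0))
    (hqr : ¬(b 0 2 = 0 ∧ b 1 2 = 0)) :
    LinearIndependent ℝ (fam (diagonal d) b) ∧
    (Submodule.span ℝ (Set.range (fam (diagonal d) b)) : Set M3) = {m : M3 | m.IsSymm} := by
  have hdet := det_Mmat d b h01 h02 h12 hpq hpr hqr
  set τ : Equiv.Perm (Fin 6) := Equiv.swap (2 : Fin 6) 3 with hτ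
  -- entry bridge
  have hMv : ∀ (c : Fin 6 → ℝ) (i : Fin 6),
      (Mmat d b).mulVec c i = (∑ j, c j • famc d b j) (R1 i) (R2 i) := by
    intro c i
    rw [Matrix.mulVec, dotProduct, Matrix.sum_apply]
    refine Finset.sum_congr rfl fun j _ => ?_
    rw [Mmat_entry d b hb i j, Matrix.smul_apply, smul_eq_mul, mul_comm]
  -- symmetry of famc entries
  have hfs : ∀ j, (famc d b j).IsSymm := by
    intro j
    rw [famc_eq]
    exact fam_symm (diagonal d) b (Matrix.isSymm_diagonal d) hb _
  constructor
  · rw [Fintype.linearIndependent_iff]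
    intro g hg
    have hsum2 : ∑ j, g (τ j) • famc d b j = 0 := by
      calc ∑ j, g (τ j) • famc d b j = ∑ j, g (τ j) • fam (diagonal d) b (τ j) := by
            refine Finset.sum_congr rfl fun j _ => by rw [famc_eq]
        _ = ∑ j, g j • fam (diagonal d) b j := Equiv.sum_comp τ (fun j => g j • fam (diagonal d) b j)
        _ = 0 := hg
    have hmv0 : (Mmat d b).mulVec (fun j => g (τ j)) = 0 := by
      funext i
      rw [hMv, hsum2]
      simp
    have hg0 : (fun j => g (τ j)) = 0 := eq_zero_of_mulVec_eq_zero hdet hmv0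
    intro i
    have := congrFun hg0 (τ i)
    simpa [hτ, Equiv.swap_apply_self] using this
  · ext m
    simp only [SetLike.mem_coe, Set.mem_setOf_eq]
    constructor
    · intro hmem
      refine Submodule.span_induction ?_ ?_ ?_ ?_ hmem
      · rintro x ⟨j, rfl⟩
        exact fam_symm (diagonal d) b (Matrix.isSymm_diagonal d) hb j
      · exact Matrix.isSymm_zero
      · intro x y _ _ hx hy
        exact Matrix.IsSymm.add hx hy
      · intro t x _ hx
        show (t • x)ᵀ = t • x
        rw [Matrix.transpose_smul, hx]
    · intro hm
      set c : Fin 6 → ℝ := (Mmat d b)⁻¹.mulVec (fun i => m (R1 i) (R2 i)) with hc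
      have hMc : (Mmat d b).mulVec c = fun i => m (R1 i) (R2 i) := by
        rw [hc, Matrix.mulVec_mulVec, Matrix.mul_nonsing_inv _ (isUnit_iff_ne_zero.mpr hdet),
          Matrix.one_mulVec]
      have hE : ∀ i, (∑ j, c j • famc d b j) (R1 i) (R2 i) = m (R1 i) (R2 i) := by
        intro i
        rw [← hMv c i, hMc]
      have hsymm : (∑ j, c j • famc d b j).IsSymm := by
        show _ᵀ = _
        rw [Matrix.transpose_sum]
        refine Finset.sum_congr rfl fun j _ => ?_
        rw [Matrix.transpose_smul, hfs j]
      have hmeq : m = ∑ j, c j • famc d b j := by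
        ext i k
        fin_cases i <;> fin_cases k
        · exact (hE 0).symm
        · exact (hE 3).symm
        · exact (hE 4).symm
        · show m 1 0 = (∑ j, c j • famc d b j) 1 0
          rw [hm.apply 0 1, hsymm.apply 0 1]; exact (hE 3).symm
        · exact (hE 1).symm
        · exact (hE 5).symm
        · show m 2 0 = (∑ j, c j • famc d b j) 2 0
          rw [hm.apply 0 2, hsymm.apply 0 2]; exact (hE 4).symm
        · show m 2 1 = (∑ j, c j • famc d b j) 2 1
          rw [hm.apply 1 2, hsymm.apply 1 2]; exact (hE 5).symm
        · exact (hE 2).symm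
      rw [hmeq]
      refine Submodule.sum_mem _ fun j _ => Submodule.smul_mem _ _ ?_
      exact Submodule.subset_span ⟨τ j, (famc_eq d b j).symm⟩

end Stmt9Aux

namespace Stmt9Aux

lemma offdiag (d : Fin 3 → ℝ) (b : M3) (hb : b.IsSymm) (htri : Triclinic (diagonal d) b) :
    ¬(b 0 1 = 0 ∧ b 0 2 = 0) ∧ ¬(b 0 1 = 0 ∧ b 1 2 = 0) ∧ ¬(b 0 2 = 0 ∧ b 1 2 = 0) := by
  have hb10 : b 1 0 = b 0 1 := hb.apply 0 1
  have hb20 : b 2 0 = b 0 2 := hb.apply 0 2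
  have hb21 : b 2 1 = b 1 2 := hb.apply 1 2
  refine ⟨?_, ?_, ?_⟩
  · rintro ⟨h1, h2⟩
    refine htri ⟨![1, 0, 0], ?_, ⟨d 0, ?_⟩, ⟨b 0 0, ?_⟩⟩
    · intro h; have := congrFun h 0; norm_num at this
    · funext i; fin_cases i <;>
        simp [Matrix.mulVec, dotProduct, Fin.sum_univ_three, Matrix.diagonal_apply]
    · funext i; fin_cases i <;>
        simp [Matrix.mulVec, dotProduct, Fin.sum_univ_three, hb10, hb20, h1, h2]
  · rintro ⟨h1, h2⟩
    refine htri ⟨![0, 1, 0], ?_, ⟨d 1, ?_⟩, ⟨b 1 1, ?_⟩⟩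
    · intro h; have := congrFun h 1; norm_num at this
    · funext i; fin_cases i <;>
        simp [Matrix.mulVec, dotProduct, Fin.sum_univ_three, Matrix.diagonal_apply]
    · funext i; fin_cases i <;>
        simp [Matrix.mulVec, dotProduct, Fin.sum_univ_three, hb21, h1, h2]
  · rintro ⟨h1, h2⟩
    refine htri ⟨![0, 0, 1], ?_, ⟨d 2, ?_⟩, ⟨b 2 2, ?_⟩⟩
    · intro h; have := congrFun h 2; exact one_ne_zero (α := ℝ) this
    · funext i; fin_cases i <;>
        simp [Matrix.mulVec, dotProduct, Fin.sum_univ_three, Matrix.diagonal_apply]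
    · funext i; fin_cases i <;>
        simp [Matrix.mulVec, dotProduct, Fin.sum_univ_three, h1, h2]

def conjE (U V : M3) (hUV : U * V = 1) (hVU : V * U = 1) : M3 ≃ₗ[ℝ] M3 where
  toFun m := U * m * V
  invFun m := V * m * U
  map_add' x y := by simp only [Matrix.mul_add, Matrix.add_mul]
  map_smul' t x := by simp only [Matrix.mul_smul, Matrix.smul_mul, RingHom.id_apply]
  left_inv m := by
    show V * (U * m * V) * U = m
    rw [show V * (U * m * V) * U = (V * U) * m * (V * U) by noncomm_ring, hVU, one_mul, mul_one]
  right_inv m := by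
    show U * (V * m * U) * V = m
    rw [show U * (V * m * U) * V = (U * V) * m * (U * V) by noncomm_ring, hUV, one_mul, mul_one]

end Stmt9Aux

open Stmt9Aux in
theorem stmt9' (a b : M3) (ha : a.IsSymm) (hb : b.IsSymm) (htri : Triclinic a b)
    (horth : Orthotropic a) :
    LinearIndependent ℝ
      (![1, a, b, a ^ 2, a * b + b * a, (a * b - b * a) ^ 2] : Fin 6 → M3) ∧
    (Submodule.span ℝ
        (Set.range (![1, a, b, a ^ 2, a * b + b * a, (a * b - b * a) ^ 2] : Fin 6 → M3))
      : Set M3) = {m : M3 | m.IsSymm} := by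
  classical
  have hA : a.IsHermitian := by
    show aᴴ = a
    rw [Matrix.conjTranspose_eq_transpose_of_trivial]; exact ha
  set U : M3 := (hA.eigenvectorUnitary : M3) with hUdef
  set V : M3 := star U with hVdef
  have hUV : U * V = 1 := Matrix.mem_unitaryGroup_iff.mp hA.eigenvectorUnitary.2
  have hVU : V * U = 1 := Matrix.mem_unitaryGroup_iff'.mp hA.eigenvectorUnitary.2
  have hUt : Uᵀ = V := by
    rw [hVdef, Matrix.star_eq_conjTranspose, Matrix.conjTranspose_eq_transpose_of_trivial]
  have hVt : Vᵀ = U := by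
    rw [← hUt, Matrix.transpose_transpose]
  set dvec : Fin 3 → ℝ := hA.eigenvalues with hdvec
  have hspec : a = U * diagonal dvec * V := by
    simpa [Function.comp, RCLike.ofReal_real_eq_id] using hA.spectral_theorem
  set b' : M3 := V * b * U with hb'def
  have hb2 : b = U * b' * V := by
    rw [hb'def, show U * (V * b * U) * V = (U * V) * b * (U * V) by noncomm_ring, hUV,
      one_mul, mul_one]
  have hb' : b'.IsSymm := by
    show b'ᵀ = b'
    rw [hb'def, Matrix.transpose_mul, Matrix.transpose_mul, hUt, hVt, hb.eq, Matrix.mul_assoc]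
  -- the diagonal entries are pairwise distinct
  have hev : ∀ (μ : ℝ) (v : Fin 3 → ℝ), v ≠ 0 → a.mulVec v = μ • v → ∃ i, dvec i = μ := by
    intro μ v hv hμ
    have hdiagm : V * a * U = diagonal dvec := by
      rw [hspec, show V * (U * diagonal dvec * V) * U = (V * U) * diagonal dvec * (V * U)
        by noncomm_ring, hVU, one_mul, mul_one]
    set w : Fin 3 → ℝ := V.mulVec v with hwdef
    have hwv : U.mulVec w = v := by
      rw [hwdef, Matrix.mulVec_mulVec, hUV, Matrix.one_mulVec]
    have hw : w ≠ 0 := by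
      intro h; rw [h, Matrix.mulVec_zero] at hwv; exact hv hwv.symm
    have hDw : (diagonal dvec).mulVec w = μ • w := by
      rw [← hdiagm, ← Matrix.mulVec_mulVec, hwv, ← Matrix.mulVec_mulVec, hμ,
        Matrix.mulVec_smul]
    obtain ⟨i, hi⟩ := Function.ne_iff.mp hw
    refine ⟨i, mul_right_cancel₀ hi ?_⟩
    have := congrFun hDw i
    rw [Matrix.mulVec_diagonal] at this
    simpa using this
  obtain ⟨l1, l2, l3, h12, h13, h23, ⟨v1, hv1, he1⟩, ⟨v2, hv2, he2⟩, ⟨v3, hv3, he3⟩⟩ := horth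
  obtain ⟨i1, hi1⟩ := hev l1 v1 hv1 he1
  obtain ⟨i2, hi2⟩ := hev l2 v2 hv2 he2
  obtain ⟨i3, hi3⟩ := hev l3 v3 hv3 he3
  have hne12 : i1 ≠ i2 := fun h => h12 (by rw [← hi1, ← hi2, h])
  have hne13 : i1 ≠ i3 := fun h => h13 (by rw [← hi1, ← hi3, h])
  have hne23 : i2 ≠ i3 := fun h => h23 (by rw [← hi2, ← hi3, h])
  have hmem : ∀ j : Fin 3, j = i1 ∨ j = i2 ∨ j = i3 := by
    intro j
    have hcard : ({i1, i2, i3} : Finset (Fin 3)).card = 3 := by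
      rw [Finset.card_insert_of_notMem (by simp [hne12, hne13]),
        Finset.card_insert_of_notMem (by simp [hne23]), Finset.card_singleton]
    have huniv : ({i1, i2, i3} : Finset (Fin 3)) = Finset.univ :=
      Finset.eq_univ_of_card _ (by simp [hcard])
    have : j ∈ ({i1, i2, i3} : Finset (Fin 3)) := huniv ▸ Finset.mem_univ j
    simpa using this
  have hdist : ∀ j k : Fin 3, j ≠ k → dvec j ≠ dvec k := by
    intro j k hjk heq
    rcases hmem j with rfl | rfl | rfl <;> rcases hmem k with rfl | rfl | rfl <;>
      first
        | exact hjk rfl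
        | exact h12 (by rw [← hi1, ← hi2]; exact heq)
        | exact h12 (by rw [← hi1, ← hi2]; exact heq.symm)
        | exact h13 (by rw [← hi1, ← hi3]; exact heq)
        | exact h13 (by rw [← hi1, ← hi3]; exact heq.symm)
        | exact h23 (by rw [← hi2, ← hi3]; exact heq)
        | exact h23 (by rw [← hi2, ← hi3]; exact heq.symm)
  -- triclinic transfer
  have haU : a * U = U * diagonal dvec := by
    rw [hspec, Matrix.mul_assoc, Matrix.mul_assoc, hVU, mul_one]
  have hbU : b * U = U * b' := by
    rw [hb2, Matrix.mul_assoc, Matrix.mul_assoc, hVU, mul_one]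
  have htri' : Triclinic (diagonal dvec) b' := by
    rintro ⟨v, hv, ⟨μ, hμ⟩, ⟨ν, hν⟩⟩
    refine htri ⟨U.mulVec v, ?_, ⟨μ, ?_⟩, ⟨ν, ?_⟩⟩
    · intro h
      have h2 : V.mulVec (U.mulVec v) = 0 := by rw [h, Matrix.mulVec_zero]
      rw [Matrix.mulVec_mulVec, hVU, Matrix.one_mulVec] at h2
      exact hv h2
    · rw [Matrix.mulVec_mulVec, haU, ← Matrix.mulVec_mulVec, hμ, Matrix.mulVec_smul]
    · rw [Matrix.mulVec_mulVec, hbU, ← Matrix.mulVec_mulVec, hν, Matrix.mulVec_smul]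
  obtain ⟨hpq, hpr, hqr⟩ := offdiag dvec b' hb' htri'
  obtain ⟨hind, hspan⟩ := core dvec b' hb' (hdist 0 1 (by decide)) (hdist 0 2 (by decide))
    (hdist 1 2 (by decide)) hpq hpr hqr
  -- transport via conjugation
  set Φ : M3 ≃ₗ[ℝ] M3 := conjE U V hUV hVU with hΦdef
  have hmulΦ : ∀ X Y : M3, (U * X * V) * (U * Y * V) = U * (X * Y) * V := by
    intro X Y
    rw [show (U * X * V) * (U * Y * V) = U * X * (V * U) * Y * V by noncomm_ring, hVU]
    noncomm_ring
  have hcomp : (![1, a, b, a ^ 2, a * b + b * a, (a * b - b * a) ^ 2] : Fin 6 → M3)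
      = fun j => Φ (fam (diagonal dvec) b' j) := by
    funext j
    fin_cases j
    · show (1 : M3) = U * 1 * V
      rw [mul_one, hUV]
    · show a = U * diagonal dvec * V
      exact hspec
    · show b = U * b' * V
      exact hb2
    · show a ^ 2 = U * (diagonal dvec ^ 2) * V
      rw [pow_two, pow_two, hspec, hmulΦ]
    · show a * b + b * a = U * (diagonal dvec * b' + b' * diagonal dvec) * V
      rw [Matrix.mul_add, Matrix.add_mul, ← hmulΦ (diagonal dvec) b', ← hmulΦ b' (diagonal dvec),
        ← hspec, ← hb2]
    · show (a * b - b * a) ^ 2 = U * ((diagonal dvec * b' - b' * diagonal dvec) ^ 2) * V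
      have hsub : a * b - b * a = U * (diagonal dvec * b' - b' * diagonal dvec) * V := by
        rw [Matrix.mul_sub, Matrix.sub_mul, ← hmulΦ (diagonal dvec) b', ← hmulΦ b' (diagonal dvec),
          ← hspec, ← hb2]
      rw [hsub, pow_two, pow_two, hmulΦ]
  constructor
  · rw [hcomp]
    exact hind.map' Φ.toLinearMap Φ.ker
  · rw [hcomp]
    have hrange : Set.range (fun j => Φ (fam (diagonal dvec) b' j))
        = Φ '' Set.range (fam (diagonal dvec) b') := by
      rw [show (fun j => Φ (fam (diagonal dvec) b' j)) = ⇑Φ ∘ fam (diagonal dvec) b' from rfl,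
        Set.range_comp]
    rw [hrange, show (⇑Φ '' Set.range (fam (diagonal dvec) b') : Set M3)
        = ⇑(Φ : M3 →ₗ[ℝ] M3) '' Set.range (fam (diagonal dvec) b') from rfl, ← Submodule.map_span]
    have hsymmΦ : ∀ m : M3, m.IsSymm → (U * m * V).IsSymm := by
      intro m hm
      show _ᵀ = _
      rw [Matrix.transpose_mul, Matrix.transpose_mul, hUt, hVt, hm.eq, Matrix.mul_assoc]
    have hsymmΦ' : ∀ m : M3, m.IsSymm → (V * m * U).IsSymm := by
      intro m hm
      show _ᵀ = _
      rw [Matrix.transpose_mul, Matrix.transpose_mul, hUt, hVt, hm.eq, Matrix.mul_assoc]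
    ext x
    simp only [SetLike.mem_coe, Submodule.mem_map, Set.mem_setOf_eq]
    constructor
    · rintro ⟨y, hy, rfl⟩
      have hy' : y.IsSymm := by
        have := Set.ext_iff.mp hspan y
        simpa using this.mp hy
      exact hsymmΦ y hy'
    · intro hx
      refine ⟨V * x * U, ?_, ?_⟩
      · have := Set.ext_iff.mp hspan (V * x * U)
        exact (by simpa using this.symm.mp (hsymmΦ' x hx) : _)
      · show U * (V * x * U) * V = x
        rw [show U * (V * x * U) * V = (U * V) * x * (U * V) by noncomm_ring, hUV,
          one_mul, mul_one]


/-- For a triclinic pair `(a,b)` of symmetric matrices with `a` orthotropic, the matrices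
`Id, a, b, a², ab+ba, (ab−ba)²` form a basis of the space of symmetric 3×3 matrices. -/
theorem stmt9 (a b : M3) (ha : a.IsSymm) (hb : b.IsSymm) (htri : Triclinic a b)
    (horth : Orthotropic a) :
    LinearIndependent ℝ
      (![1, a, b, a ^ 2, a * b + b * a, (a * b - b * a) ^ 2] : Fin 6 → M3) ∧
    (Submodule.span ℝ
        (Set.range (![1, a, b, a ^ 2, a * b + b * a, (a * b - b * a) ^ 2] : Fin 6 → M3))
      : Set M3) = {m : M3 | m.IsSymm} :=
  stmt9' a b ha hb htri horth
end
end

section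
/- Let a = diag(λ₁,λ₂,λ₃) be a real diagonal 3×3 matrix and b a real symmetric 3×3 matrix with off-diagonal entries b₂₃ = x, b₁₃ = y, b₁₂ = z (and arbitrary diagonal entries). Let M be the 3×3 matrix whose three rows are indexed by the off-diagonal slots (2,3), (1,3), (1,2) and whose columns consist of the corresponding entries of b, of (ab)ˢ = ab + ba, and of [a,b]² = (ab − ba)². Then det M = (λ₂ − λ₁)(λ₃ − λ₁)(λ₃ − λ₂)(x²y² + y²z² + z²x²). -/
open Matrix BigOperators

noncomputable section

/-- Determinant of the matrix `M` built from the off-diagonal slots `(2,3), (1,3), (1,2)`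
of `b`, `(ab)ˢ = ab+ba` and `[a,b]² = (ab−ba)²`, for `a = diag(λ₁,λ₂,λ₃)` and `b`
symmetric with `b₂₃ = x`, `b₁₃ = y`, `b₁₂ = z`. -/
theorem stmt10 (l1 l2 l3 x y z : ℝ) (b : M3) (hb : b.IsSymm)
    (hx : b 1 2 = x) (hy : b 0 2 = y) (hz : b 0 1 = z) :
    let a : M3 := Matrix.diagonal ![l1, l2, l3]
    (Matrix.of
      ![![b 1 2, (a * b + b * a) 1 2, ((a * b - b * a) ^ 2) 1 2],
        ![b 0 2, (a * b + b * a) 0 2, ((a * b - b * a) ^ 2) 0 2],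
        ![b 0 1, (a * b + b * a) 0 1, ((a * b - b * a) ^ 2) 0 1]]).det
      = (l2 - l1) * (l3 - l1) * (l3 - l2) *
          (x ^ 2 * y ^ 2 + y ^ 2 * z ^ 2 + z ^ 2 * x ^ 2) := by
  have h21 : b 2 1 = x := by rw [← hx, ← hb.apply 1 2]
  have h20 : b 2 0 = y := by rw [← hy, ← hb.apply 0 2]
  have h10 : b 1 0 = z := by rw [← hz, ← hb.apply 0 1]
  intro a
  set d : Fin 3 → ℝ := ![l1, l2, l3] with hd
  have key1 : ∀ i j : Fin 3, (a * b + b * a) i j = d i * b i j + b i j * d j := by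
    intro i j
    simp [a, hd, Matrix.add_apply, Matrix.diagonal_mul, Matrix.mul_diagonal]
  have key2 : ∀ i j : Fin 3, (a * b - b * a) i j = (d i - d j) * b i j := by
    intro i j
    simp [a, Matrix.sub_apply, Matrix.diagonal_mul, Matrix.mul_diagonal]
    ring
  have key3 : ∀ i j : Fin 3, ((a * b - b * a) ^ 2) i j
      = ∑ k : Fin 3, (d i - d k) * b i k * ((d k - d j) * b k j) := by
    intro i j
    rw [pow_two, Matrix.mul_apply]
    exact Finset.sum_congr rfl fun k _ => by rw [key2, key2]
  rw [Matrix.det_fin_three]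
  simp only [Matrix.of_apply, Matrix.cons_val', Matrix.cons_val_zero, Matrix.cons_val_one,
    Matrix.head_cons, Matrix.empty_val', Matrix.cons_val_fin_one, Matrix.cons_val_two,
    Matrix.tail_cons, key1, key3, Fin.sum_univ_three]
  have d0 : d 0 = l1 := rfl
  have d1 : d 1 = l2 := rfl
  have d2 : d 2 = l3 := rfl
  simp only [Matrix.vecHead, d0, d1, d2, hx, hy, hz, h21, h20, h10]
  ring
end
end

section
/- Let (a,b) be a triclinic pair of real symmetric 3×3 matrices such that a is orthotropic. Then the deviatoric (traceless) parts of the five matrices a, b, a², (ab)ˢ = ab + ba, and [a,b]² = (ab − ba)² form a basis of the 5-dimensional real vector space of traceless symmetric 3×3 matrices. -/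
open Matrix BigOperators

noncomputable section

/-- Deviatoric (traceless) part of a 3×3 matrix. -/
def dev (m : M3) : M3 := m - (m.trace / 3) • 1

lemma trace_dev (m : M3) : (dev m).trace = 0 := by
  simp [dev, Matrix.trace_smul, Matrix.trace_one]

lemma isSymm_dev {m : M3} (hm : m.IsSymm) : (dev m).IsSymm := by
  unfold Matrix.IsSymm dev
  rw [Matrix.transpose_sub, Matrix.transpose_smul, Matrix.transpose_one, hm]

section gens
variable (l1 l2 l3 : ℝ) (b : M3) (hb : b.IsSymm)

lemma gen0 : dev (diagonal ![l1,l2,l3]) =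
    !![l1 - (l1+l2+l3)/3, 0, 0; 0, l2 - (l1+l2+l3)/3, 0; 0, 0, l3 - (l1+l2+l3)/3] := by
  ext i j
  fin_cases i <;> fin_cases j <;>
    simp [dev, Matrix.trace_fin_three, Matrix.one_apply, Matrix.diagonal_apply,
      Matrix.vecHead, Matrix.vecTail, Fin.sum_univ_three] <;> ring

lemma gen2 : dev ((diagonal ![l1,l2,l3])^2) =
    !![l1^2 - (l1^2+l2^2+l3^2)/3, 0, 0; 0, l2^2 - (l1^2+l2^2+l3^2)/3, 0;
       0, 0, l3^2 - (l1^2+l2^2+l3^2)/3] := by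
  ext i j
  fin_cases i <;> fin_cases j <;>
    simp [dev, Matrix.trace_fin_three, Matrix.one_apply, pow_two, Matrix.mul_apply,
      Fin.sum_univ_three, Matrix.diagonal_apply, Matrix.vecHead, Matrix.vecTail] <;> ring

lemma gen1 : dev b = !![b 0 0 - (b 0 0 + b 1 1 + b 2 2)/3, b 0 1, b 0 2;
    b 1 0, b 1 1 - (b 0 0 + b 1 1 + b 2 2)/3, b 1 2;
    b 2 0, b 2 1, b 2 2 - (b 0 0 + b 1 1 + b 2 2)/3] := by
  ext i j
  fin_cases i <;> fin_cases j <;>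
    simp [dev, Matrix.trace_fin_three, Matrix.one_apply] <;> ring

include hb in
lemma gen3 : dev ((diagonal ![l1,l2,l3]) * b + b * (diagonal ![l1,l2,l3])) =
    !![2*l1*(b 0 0) - (2*l1*(b 0 0)+2*l2*(b 1 1)+2*l3*(b 2 2))/3, (l1+l2)*(b 0 1), (l1+l3)*(b 0 2);
       (l1+l2)*(b 0 1), 2*l2*(b 1 1) - (2*l1*(b 0 0)+2*l2*(b 1 1)+2*l3*(b 2 2))/3, (l2+l3)*(b 1 2);
       (l1+l3)*(b 0 2), (l2+l3)*(b 1 2),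
         2*l3*(b 2 2) - (2*l1*(b 0 0)+2*l2*(b 1 1)+2*l3*(b 2 2))/3] := by
  have e10 : b 1 0 = b 0 1 := hb.apply 0 1
  have e20 : b 2 0 = b 0 2 := hb.apply 0 2
  have e21 : b 2 1 = b 1 2 := hb.apply 1 2
  ext i j
  fin_cases i <;> fin_cases j <;>
    simp [dev, Matrix.trace_fin_three, Matrix.one_apply, Matrix.mul_apply,
      Fin.sum_univ_three, Matrix.diagonal_apply, Matrix.vecHead, Matrix.vecTail,
      e10, e20, e21] <;> ring

include hb in
lemma gen4 : dev (((diagonal ![l1,l2,l3]) * b - b * (diagonal ![l1,l2,l3]))^2) =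
    !![-((l1-l2)^2*(b 0 1)^2 + (l1-l3)^2*(b 0 2)^2) + (((l1-l2)^2*(b 0 1)^2 + (l1-l3)^2*(b 0 2)^2) + ((l1-l2)^2*(b 0 1)^2 + (l2-l3)^2*(b 1 2)^2) + ((l1-l3)^2*(b 0 2)^2 + (l2-l3)^2*(b 1 2)^2))/3,
       (l1-l3)*(l3-l2)*(b 0 2)*(b 1 2), (l1-l2)*(l2-l3)*(b 0 1)*(b 1 2);
       (l1-l3)*(l3-l2)*(b 0 2)*(b 1 2),
       -((l1-l2)^2*(b 0 1)^2 + (l2-l3)^2*(b 1 2)^2) + (((l1-l2)^2*(b 0 1)^2 + (l1-l3)^2*(b 0 2)^2) + ((l1-l2)^2*(b 0 1)^2 + (l2-l3)^2*(b 1 2)^2) + ((l1-l3)^2*(b 0 2)^2 + (l2-l3)^2*(b 1 2)^2))/3,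
       (l2-l1)*(l1-l3)*(b 0 1)*(b 0 2);
       (l1-l2)*(l2-l3)*(b 0 1)*(b 1 2), (l2-l1)*(l1-l3)*(b 0 1)*(b 0 2),
       -((l1-l3)^2*(b 0 2)^2 + (l2-l3)^2*(b 1 2)^2) + (((l1-l2)^2*(b 0 1)^2 + (l1-l3)^2*(b 0 2)^2) + ((l1-l2)^2*(b 0 1)^2 + (l2-l3)^2*(b 1 2)^2) + ((l1-l3)^2*(b 0 2)^2 + (l2-l3)^2*(b 1 2)^2))/3] := by
  have e10 : b 1 0 = b 0 1 := hb.apply 0 1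
  have e20 : b 2 0 = b 0 2 := hb.apply 0 2
  have e21 : b 2 1 = b 1 2 := hb.apply 1 2
  ext i j
  fin_cases i <;> fin_cases j <;>
    simp [dev, Matrix.trace_fin_three, Matrix.one_apply, pow_two, Matrix.mul_apply,
      Fin.sum_univ_three, Matrix.diagonal_apply, Matrix.vecHead, Matrix.vecTail,
      e10, e20, e21] <;> ring

end gens

lemma sumsq_pos {b : M3} (hpq : b 0 1 ≠ 0 ∨ b 0 2 ≠ 0) (hpr : b 0 1 ≠ 0 ∨ b 1 2 ≠ 0)
    (hqr : b 0 2 ≠ 0 ∨ b 1 2 ≠ 0) :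
    0 < (b 0 1)^2*(b 0 2)^2 + (b 0 1)^2*(b 1 2)^2 + (b 0 2)^2*(b 1 2)^2 := by
  set p := b 0 1; set q := b 0 2; set r := b 1 2
  rcases hpq with h1 | h1 <;> rcases hqr with h2 | h2
  · have : 0 < p^2*q^2 := by positivity
    nlinarith [sq_nonneg (p*r), sq_nonneg (q*r)]
  · have : 0 < p^2*r^2 := by positivity
    nlinarith [sq_nonneg (p*q), sq_nonneg (q*r)]
  · rcases hpr with h3 | h3
    · have : 0 < p^2*q^2 := by positivity
      nlinarith [sq_nonneg (p*r), sq_nonneg (q*r)]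
    · have : 0 < q^2*r^2 := by positivity
      nlinarith [sq_nonneg (p*q), sq_nonneg (p*r)]
  · have : 0 < q^2*r^2 := by positivity
    nlinarith [sq_nonneg (p*q), sq_nonneg (p*r)]

set_option maxHeartbeats 2000000 in
lemma core {l1 l2 l3 : ℝ} {b : M3} (hb : b.IsSymm)
    (h12 : l1 ≠ l2) (h13 : l1 ≠ l3) (h23 : l2 ≠ l3)
    (hpq : b 0 1 ≠ 0 ∨ b 0 2 ≠ 0) (hpr : b 0 1 ≠ 0 ∨ b 1 2 ≠ 0)
    (hqr : b 0 2 ≠ 0 ∨ b 1 2 ≠ 0) :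
    LinearIndependent ℝ
      (![dev (diagonal ![l1,l2,l3]), dev b, dev ((diagonal ![l1,l2,l3]) ^ 2),
         dev ((diagonal ![l1,l2,l3]) * b + b * (diagonal ![l1,l2,l3])),
         dev (((diagonal ![l1,l2,l3]) * b - b * (diagonal ![l1,l2,l3])) ^ 2)] : Fin 5 → M3) ∧
    (Submodule.span ℝ
        (Set.range (![dev (diagonal ![l1,l2,l3]), dev b, dev ((diagonal ![l1,l2,l3]) ^ 2),
         dev ((diagonal ![l1,l2,l3]) * b + b * (diagonal ![l1,l2,l3])),
         dev (((diagonal ![l1,l2,l3]) * b - b * (diagonal ![l1,l2,l3])) ^ 2)] : Fin 5 → M3)) : Set M3)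
      = {m : M3 | m.IsSymm ∧ m.trace = 0} := by
  have e10 : b 1 0 = b 0 1 := hb.apply 0 1
  have e20 : b 2 0 = b 0 2 := hb.apply 0 2
  have e21 : b 2 1 = b 1 2 := hb.apply 1 2
  have hg0 := gen0 l1 l2 l3
  have hg1 := gen1 b
  have hg2 := gen2 l1 l2 l3
  have hg3 := gen3 l1 l2 l3 b hb
  have hg4 := gen4 l1 l2 l3 b hb
  set p := b 0 1 with hpdef
  set q := b 0 2 with hqdef
  set r := b 1 2 with hrdef
  have hSig : 0 < p^2*q^2 + p^2*r^2 + q^2*r^2 := sumsq_pos hpq hpr hqr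
  have hP : (l1-l2)*(l2-l3)*(l3-l1) ≠ 0 := by
    have t1 : l1 - l2 ≠ 0 := sub_ne_zero.mpr h12
    have t2 : l2 - l3 ≠ 0 := sub_ne_zero.mpr h23
    have t3 : l3 - l1 ≠ 0 := sub_ne_zero.mpr (Ne.symm h13)
    exact mul_ne_zero (mul_ne_zero t1 t2) t3
  set K : Matrix (Fin 3) (Fin 3) ℝ :=
    !![p, q, r;
       (l1+l2)*p, (l1+l3)*q, (l2+l3)*r;
       (l1-l3)*(l3-l2)*q*r, (l1-l2)*(l2-l3)*p*r, (l2-l1)*(l1-l3)*p*q] with hKdef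
  have hdetK : K.det ≠ 0 := by
    have : K.det = -((l1-l2)*(l2-l3)*(l3-l1)*(p^2*q^2 + p^2*r^2 + q^2*r^2)) := by
      rw [hKdef]; simp [Matrix.det_fin_three]; ring
    rw [this]
    exact neg_ne_zero.mpr (mul_ne_zero hP hSig.ne')
  set J : Matrix (Fin 2) (Fin 2) ℝ := !![l1-l2, l2-l3; l1^2-l2^2, l2^2-l3^2] with hJdef
  have hdetJ : J.det ≠ 0 := by
    have : J.det = (l1-l2)*(l2-l3)*(l3-l1) := by
      rw [hJdef]; simp [Matrix.det_fin_two]; ring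
    rw [this]; exact hP
  constructor
  · -- linear independence
    rw [Fintype.linearIndependent_iff]
    intro c hc
    rw [Fin.sum_univ_five] at hc
    simp only [Matrix.cons_val_zero, Matrix.cons_val_one, Matrix.head_cons,
      Matrix.cons_val_two, Matrix.tail_cons, Matrix.cons_val_three,
      Matrix.cons_val_four, Matrix.head_fin_const] at hc
    rw [hg0, hg1, hg2, hg3, hg4] at hc
    have E01 := congrFun (congrFun hc 0) 1
    have E02 := congrFun (congrFun hc 0) 2
    have E12 := congrFun (congrFun hc 1) 2
    simp [Matrix.add_apply, Matrix.smul_apply, smul_eq_mul] at E01 E02 E12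
    have h134 : (![c 1, c 3, c 4] : Fin 3 → ℝ) = 0 := by
      apply Matrix.eq_zero_of_mulVec_eq_zero (M := Kᵀ) (by rwa [Matrix.det_transpose])
      funext j
      fin_cases j <;>
        simp [Matrix.mulVec, dotProduct, Fin.sum_univ_three, hKdef] <;>
        linarith [E01, E02, E12]
    have hc1 : c 1 = 0 := congrFun h134 0
    have hc3 : c 3 = 0 := congrFun h134 1
    have hc4 : c 4 = 0 := congrFun h134 2
    have E00 := congrFun (congrFun hc 0) 0
    have E11 := congrFun (congrFun hc 1) 1
    have E22 := congrFun (congrFun hc 2) 2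
    simp [Matrix.add_apply, Matrix.smul_apply, smul_eq_mul, hc1, hc3, hc4] at E00 E11 E22
    have h02 : (![c 0, c 2] : Fin 2 → ℝ) = 0 := by
      apply Matrix.eq_zero_of_mulVec_eq_zero (M := Jᵀ) (by rwa [Matrix.det_transpose])
      funext j
      fin_cases j <;>
        simp [Matrix.mulVec, dotProduct, Fin.sum_univ_two, hJdef] <;>
        linarith [E00, E11, E22]
    have hc0 : c 0 = 0 := congrFun h02 0
    have hc2 : c 2 = 0 := congrFun h02 1
    intro i
    fin_cases i <;> assumption
  · -- span
    have hA : (diagonal ![l1,l2,l3]).IsSymm := Matrix.isSymm_diagonal _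
    have hXT : ((diagonal ![l1,l2,l3]) * b - b * (diagonal ![l1,l2,l3]))ᵀ
        = -((diagonal ![l1,l2,l3]) * b - b * (diagonal ![l1,l2,l3])) := by
      rw [Matrix.transpose_sub, Matrix.transpose_mul, Matrix.transpose_mul, hA.eq, hb.eq,
        neg_sub]
    have hS0 : (dev (diagonal ![l1,l2,l3])).IsSymm := isSymm_dev hA
    have hS1 : (dev b).IsSymm := isSymm_dev hb
    have hS2 : (dev ((diagonal ![l1,l2,l3])^2)).IsSymm := by
      refine isSymm_dev ?_
      unfold Matrix.IsSymm
      rw [Matrix.transpose_pow, hA.eq]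
    have hS3 : (dev ((diagonal ![l1,l2,l3]) * b + b * (diagonal ![l1,l2,l3]))).IsSymm := by
      refine isSymm_dev ?_
      unfold Matrix.IsSymm
      rw [Matrix.transpose_add, Matrix.transpose_mul, Matrix.transpose_mul, hA.eq, hb.eq,
        add_comm]
    have hS4 : (dev (((diagonal ![l1,l2,l3]) * b - b * (diagonal ![l1,l2,l3]))^2)).IsSymm := by
      refine isSymm_dev ?_
      unfold Matrix.IsSymm
      rw [Matrix.transpose_pow, hXT, neg_sq]
    apply le_antisymm
    · intro m hm
      induction hm using Submodule.span_induction with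
      | mem x hx =>
        obtain ⟨i, rfl⟩ := hx
        fin_cases i
        · exact ⟨hS0, trace_dev _⟩
        · exact ⟨hS1, trace_dev _⟩
        · exact ⟨hS2, trace_dev _⟩
        · exact ⟨hS3, trace_dev _⟩
        · exact ⟨hS4, trace_dev _⟩
      | zero => exact ⟨Matrix.isSymm_zero, by simp⟩
      | add x y _ _ hx hy =>
        exact ⟨Matrix.IsSymm.add hx.1 hy.1, by rw [Matrix.trace_add, hx.2, hy.2, add_zero]⟩
      | smul t x _ hx =>
        refine ⟨?_, by rw [Matrix.trace_smul, hx.2, smul_zero]⟩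
        unfold Matrix.IsSymm
        rw [Matrix.transpose_smul, hx.1.eq]
    · rintro m ⟨hms, hmt⟩
      have m10 : m 1 0 = m 0 1 := hms.apply 0 1
      have m20 : m 2 0 = m 0 2 := hms.apply 0 2
      have m21 : m 2 1 = m 1 2 := hms.apply 1 2
      have htrm : m 0 0 + m 1 1 + m 2 2 = 0 := by
        rw [Matrix.trace_fin_three] at hmt; exact hmt
      set c1 : Fin 3 → ℝ := (Kᵀ)⁻¹ *ᵥ ![m 0 1, m 0 2, m 1 2] with hc1def
      have hy : Kᵀ *ᵥ c1 = ![m 0 1, m 0 2, m 1 2] := by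
        rw [hc1def, Matrix.mulVec_mulVec, Matrix.mul_nonsing_inv, Matrix.one_mulVec]
        exact isUnit_iff_ne_zero.mpr (by rwa [Matrix.det_transpose])
      have hy0 := congrFun hy 0
      have hy1 := congrFun hy 1
      have hy2 := congrFun hy 2
      simp [Matrix.mulVec, dotProduct, Fin.sum_univ_three, hKdef] at hy0 hy1 hy2
      set G0 := dev (diagonal ![l1,l2,l3]) with hG0
      set G1 := dev b with hG1
      set G2 := dev ((diagonal ![l1,l2,l3])^2) with hG2
      set G3 := dev ((diagonal ![l1,l2,l3]) * b + b * (diagonal ![l1,l2,l3])) with hG3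
      set G4 := dev (((diagonal ![l1,l2,l3]) * b - b * (diagonal ![l1,l2,l3]))^2) with hG4
      set n : M3 := m - (c1 0 • G1 + c1 1 • G3 + c1 2 • G4) with hndef
      have hn01 : n 0 1 = 0 := by
        simp [hndef, Matrix.sub_apply, Matrix.add_apply, Matrix.smul_apply, hg1, hg3, hg4]
        linarith [hy0]
      have hn02 : n 0 2 = 0 := by
        simp [hndef, Matrix.sub_apply, Matrix.add_apply, Matrix.smul_apply, hg1, hg3, hg4]
        linarith [hy1]
      have hn12 : n 1 2 = 0 := by
        simp [hndef, Matrix.sub_apply, Matrix.add_apply, Matrix.smul_apply, hg1, hg3, hg4]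
        linarith [hy2]
      have hn10 : n 1 0 = 0 := by
        simp [hndef, Matrix.sub_apply, Matrix.add_apply, Matrix.smul_apply, hg1, hg3, hg4,
          e10, m10]
        linarith [hy0]
      have hn20 : n 2 0 = 0 := by
        simp [hndef, Matrix.sub_apply, Matrix.add_apply, Matrix.smul_apply, hg1, hg3, hg4,
          e20, m20]
        linarith [hy1]
      have hn21 : n 2 1 = 0 := by
        simp [hndef, Matrix.sub_apply, Matrix.add_apply, Matrix.smul_apply, hg1, hg3, hg4,
          e21, m21]
        linarith [hy2]
      have hntr : n 0 0 + n 1 1 + n 2 2 = 0 := by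
        simp [hndef, Matrix.sub_apply, Matrix.add_apply, Matrix.smul_apply, hg1, hg3, hg4]
        linarith [htrm]
      set c2 : Fin 2 → ℝ := (Jᵀ)⁻¹ *ᵥ ![n 0 0 - n 1 1, n 1 1 - n 2 2] with hc2def
      have hz : Jᵀ *ᵥ c2 = ![n 0 0 - n 1 1, n 1 1 - n 2 2] := by
        rw [hc2def, Matrix.mulVec_mulVec, Matrix.mul_nonsing_inv, Matrix.one_mulVec]
        exact isUnit_iff_ne_zero.mpr (by rwa [Matrix.det_transpose])
      have hz0 := congrFun hz 0
      have hz1 := congrFun hz 1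
      simp [Matrix.mulVec, dotProduct, Fin.sum_univ_two, hJdef] at hz0 hz1
      have hzero : n - (c2 0 • G0 + c2 1 • G2) = 0 := by
        ext i j
        fin_cases i <;> fin_cases j <;>
          simp [Matrix.sub_apply, Matrix.add_apply, Matrix.smul_apply, hg0, hg2,
            Matrix.vecHead, Matrix.vecTail, hn01, hn02, hn12, hn10, hn20, hn21] <;>
          linarith [hz0, hz1, hntr]
      have hkey : m = c2 0 • G0 + c1 0 • G1 + c2 1 • G2 + c1 1 • G3 + c1 2 • G4 := by
        have h1 : n = c2 0 • G0 + c2 1 • G2 := by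
          have h := sub_eq_zero.mp hzero
          exact h
        have h2 : m = n + (c1 0 • G1 + c1 1 • G3 + c1 2 • G4) := by
          rw [hndef]; abel
        rw [h2, h1]; abel
      have hmem : ∀ i : Fin 5, (![G0, G1, G2, G3, G4] : Fin 5 → M3) i ∈
          Submodule.span ℝ (Set.range (![G0, G1, G2, G3, G4] : Fin 5 → M3)) :=
        fun i => Submodule.subset_span (Set.mem_range_self i)
      have q0 : G0 ∈ Submodule.span ℝ (Set.range (![G0, G1, G2, G3, G4] : Fin 5 → M3)) := hmem 0
      have q1 : G1 ∈ Submodule.span ℝ (Set.range (![G0, G1, G2, G3, G4] : Fin 5 → M3)) := hmem 1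
      have q2 : G2 ∈ Submodule.span ℝ (Set.range (![G0, G1, G2, G3, G4] : Fin 5 → M3)) := hmem 2
      have q3 : G3 ∈ Submodule.span ℝ (Set.range (![G0, G1, G2, G3, G4] : Fin 5 → M3)) := hmem 3
      have q4 : G4 ∈ Submodule.span ℝ (Set.range (![G0, G1, G2, G3, G4] : Fin 5 → M3)) := hmem 4
      rw [hkey]
      exact Submodule.add_mem _ (Submodule.add_mem _ (Submodule.add_mem _
        (Submodule.add_mem _ (Submodule.smul_mem _ _ q0) (Submodule.smul_mem _ _ q1))
        (Submodule.smul_mem _ _ q2)) (Submodule.smul_mem _ _ q3))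
        (Submodule.smul_mem _ _ q4)
section reduction

lemma distinct_of (d : Fin 3 → ℝ) (l1 l2 l3 : ℝ) (h12 : l1 ≠ l2) (h13 : l1 ≠ l3)
    (h23 : l2 ≠ l3) (i1 i2 i3 : Fin 3) (e1 : l1 = d i1) (e2 : l2 = d i2) (e3 : l3 = d i3) :
    d 0 ≠ d 1 ∧ d 0 ≠ d 2 ∧ d 1 ≠ d 2 := by
  subst e1 e2 e3
  fin_cases i1 <;> fin_cases i2 <;> fin_cases i3 <;>
    refine ⟨?_, ?_, ?_⟩ <;>
    first
      | assumption
      | (exact absurd rfl (by assumption))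
      | (exact fun hE => absurd hE.symm (by assumption))

lemma eig_diag {d : Fin 3 → ℝ} {w : Fin 3 → ℝ} {μ : ℝ} (hw : w ≠ 0)
    (h : (diagonal d) *ᵥ w = μ • w) : ∃ i, μ = d i := by
  have : ∃ i, w i ≠ 0 := by
    by_contra hc
    push_neg at hc
    exact hw (funext hc)
  obtain ⟨i, hi⟩ := this
  refine ⟨i, ?_⟩
  have := congrFun h i
  simp [Matrix.mulVec_diagonal] at this
  rcases this with h' | h'
  · exact h'.symm
  · exact absurd h' hi

/-- For a triclinic pair `(a,b)` of symmetric matrices with `a` orthotropic, the deviatoric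
parts of `a, b, a², ab+ba, (ab−ba)²` form a basis of the space of traceless symmetric
3×3 matrices. -/
theorem stmt11 (a b : M3) (ha : a.IsSymm) (hb : b.IsSymm) (htri : Triclinic a b)
    (horth : Orthotropic a) :
    LinearIndependent ℝ
      (![dev a, dev b, dev (a ^ 2), dev (a * b + b * a),
         dev ((a * b - b * a) ^ 2)] : Fin 5 → M3) ∧
    (Submodule.span ℝ
        (Set.range (![dev a, dev b, dev (a ^ 2), dev (a * b + b * a),
          dev ((a * b - b * a) ^ 2)] : Fin 5 → M3)) : Set M3)
      = {m : M3 | m.IsSymm ∧ m.trace = 0} := by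
  have haH : a.IsHermitian := by
    show aᴴ = a
    ext i j
    rw [Matrix.conjTranspose_apply, star_trivial]
    exact congrFun (congrFun ha i) j
  set U : M3 := (haH.eigenvectorUnitary : M3) with hUdef
  set d : Fin 3 → ℝ := haH.eigenvalues with hddef
  have hstar : star U = Uᵀ := by
    ext i j
    simp [Matrix.conjTranspose_apply]
  have hU1 : U * Uᵀ = 1 := by
    rw [← hstar]; exact (Matrix.mem_unitaryGroup_iff).mp haH.eigenvectorUnitary.2
  have hU2 : Uᵀ * U = 1 := by
    rw [← hstar]; exact (Matrix.mem_unitaryGroup_iff').mp haH.eigenvectorUnitary.2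
  have hdvec : (![d 0, d 1, d 2] : Fin 3 → ℝ) = d := by
    funext i; fin_cases i <;> rfl
  have hspec : a = U * diagonal d * Uᵀ := by
    rw [← hstar]
    have := haH.spectral_theorem
    simpa [RCLike.ofReal_real_eq_id] using this
  set A : M3 := diagonal d with hAdef
  set B : M3 := Uᵀ * b * U with hBdef
  have hbB : b = U * B * Uᵀ := by
    rw [hBdef]
    calc b = (U * Uᵀ) * b * (U * Uᵀ) := by rw [hU1]; simp
    _ = U * (Uᵀ * b * U) * Uᵀ := by noncomm_ring
  have hBsymm : B.IsSymm := by
    unfold Matrix.IsSymm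
    rw [hBdef, Matrix.transpose_mul, Matrix.transpose_mul, Matrix.transpose_transpose, hb.eq,
      Matrix.mul_assoc]
  -- transfer of eigen-equations from a to A
  have transfer : ∀ (v : Fin 3 → ℝ) (μ : ℝ), v ≠ 0 → a *ᵥ v = μ • v →
      ∃ i, μ = d i := by
    intro v μ hv he
    have h1 : A *ᵥ (Uᵀ *ᵥ v) = μ • (Uᵀ *ᵥ v) := by
      rw [Matrix.mulVec_mulVec, ← Matrix.mulVec_smul]
      have : A * Uᵀ = Uᵀ * a := by
        rw [hspec]
        calc A * Uᵀ = (Uᵀ * U) * A * Uᵀ := by rw [hU2]; simp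
        _ = Uᵀ * (U * A * Uᵀ) := by noncomm_ring
      rw [this, ← Matrix.mulVec_mulVec, he, Matrix.mulVec_smul]
    have h2 : Uᵀ *ᵥ v ≠ 0 := by
      intro hz
      apply hv
      have : U *ᵥ (Uᵀ *ᵥ v) = v := by
        rw [Matrix.mulVec_mulVec, hU1, Matrix.one_mulVec]
      rw [hz, Matrix.mulVec_zero] at this
      exact this.symm
    exact eig_diag h2 h1
  -- distinctness of the d i
  obtain ⟨l1, l2, l3, h12, h13, h23, ⟨v1, hv1, he1⟩, ⟨v2, hv2, he2⟩, ⟨v3, hv3, he3⟩⟩ := horth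
  obtain ⟨i1, hi1⟩ := transfer v1 l1 hv1 he1
  obtain ⟨i2, hi2⟩ := transfer v2 l2 hv2 he2
  obtain ⟨i3, hi3⟩ := transfer v3 l3 hv3 he3
  have hd : d 0 ≠ d 1 ∧ d 0 ≠ d 2 ∧ d 1 ≠ d 2 :=
    distinct_of d l1 l2 l3 h12 h13 h23 i1 i2 i3 hi1 hi2 hi3
  -- triclinic conditions on B
  have commev : ∀ (i : Fin 3), ¬ ((∃ μ : ℝ, B *ᵥ (fun j => if j = i then (1:ℝ) else 0) =
      μ • (fun j => if j = i then (1:ℝ) else 0))) := by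
    intro i hcon
    obtain ⟨ν, hν⟩ := hcon
    apply htri
    set e : Fin 3 → ℝ := fun j => if j = i then 1 else 0 with hedef
    have hei : e ≠ 0 := by
      intro hz
      have := congrFun hz i
      simp [hedef] at this
    refine ⟨U *ᵥ e, ?_, ⟨d i, ?_⟩, ⟨ν, ?_⟩⟩
    · intro hz
      apply hei
      have : Uᵀ *ᵥ (U *ᵥ e) = e := by
        rw [Matrix.mulVec_mulVec, hU2, Matrix.one_mulVec]
      rw [hz, Matrix.mulVec_zero] at this
      exact this.symm
    · rw [hspec]
      have hAe : A *ᵥ e = d i • e := by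
        funext j
        simp [hAdef, Matrix.mulVec_diagonal, hedef]
        by_cases hji : j = i <;> simp [hji]
      calc (U * A * Uᵀ) *ᵥ (U *ᵥ e) = (U * A * (Uᵀ * U)) *ᵥ e := by
            rw [Matrix.mulVec_mulVec]; noncomm_ring
      _ = (U * A) *ᵥ e := by rw [hU2]; simp
      _ = U *ᵥ (A *ᵥ e) := by rw [Matrix.mulVec_mulVec]
      _ = d i • (U *ᵥ e) := by rw [hAe, Matrix.mulVec_smul]
    · rw [hbB]
      calc (U * B * Uᵀ) *ᵥ (U *ᵥ e) = (U * B * (Uᵀ * U)) *ᵥ e := by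
            rw [Matrix.mulVec_mulVec]; noncomm_ring
      _ = (U * B) *ᵥ e := by rw [hU2]; simp
      _ = U *ᵥ (B *ᵥ e) := by rw [Matrix.mulVec_mulVec]
      _ = ν • (U *ᵥ e) := by rw [hν, Matrix.mulVec_smul]
  have Bcol : ∀ (i : Fin 3), B *ᵥ (fun j => if j = i then (1:ℝ) else 0) = fun j => B j i := by
    intro i
    funext j
    fin_cases i <;> fin_cases j <;>
      simp [Matrix.mulVec, dotProduct, Fin.sum_univ_three]
  have hpq : B 0 1 ≠ 0 ∨ B 0 2 ≠ 0 := by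
    by_contra hc
    push_neg at hc
    apply commev 0
    refine ⟨B 0 0, ?_⟩
    rw [Bcol 0]
    funext j
    have h10 : B 1 0 = 0 := by rw [hBsymm.apply 0 1]; exact hc.1
    have h20 : B 2 0 = 0 := by rw [hBsymm.apply 0 2]; exact hc.2
    fin_cases j <;> simp [h10, h20]
  have hpr : B 0 1 ≠ 0 ∨ B 1 2 ≠ 0 := by
    by_contra hc
    push_neg at hc
    apply commev 1
    refine ⟨B 1 1, ?_⟩
    rw [Bcol 1]
    funext j
    have h21 : B 2 1 = 0 := by rw [hBsymm.apply 1 2]; exact hc.2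
    fin_cases j <;> simp [hc.1, h21]
  have hqr : B 0 2 ≠ 0 ∨ B 1 2 ≠ 0 := by
    by_contra hc
    push_neg at hc
    apply commev 2
    refine ⟨B 2 2, ?_⟩
    rw [Bcol 2]
    funext j
    fin_cases j <;> simp [hc.1, hc.2]
  -- apply the core lemma
  have hcore := core hBsymm hd.1 hd.2.1 hd.2.2 hpq hpr hqr
  rw [hdvec] at hcore
  -- conjugation linear map
  set T : M3 →ₗ[ℝ] M3 :=
    { toFun := fun m => U * m * Uᵀ
      map_add' := by intro x y; noncomm_ring
      map_smul' := by intro t x; simp [Matrix.mul_smul, Matrix.smul_mul] } with hTdef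
  have hTinj : LinearMap.ker T = ⊥ := by
    rw [LinearMap.ker_eq_bot]
    intro x y hxy
    simp only [hTdef, LinearMap.coe_mk, AddHom.coe_mk] at hxy
    calc x = Uᵀ * (U * x * Uᵀ) * U := by
          rw [show Uᵀ * (U * x * Uᵀ) * U = (Uᵀ * U) * x * (Uᵀ * U) by noncomm_ring, hU2]; simp
    _ = Uᵀ * (U * y * Uᵀ) * U := by rw [hxy]
    _ = y := by
          rw [show Uᵀ * (U * y * Uᵀ) * U = (Uᵀ * U) * y * (Uᵀ * U) by noncomm_ring, hU2]; simp
  have hdevT : ∀ m : M3, dev (U * m * Uᵀ) = U * dev m * Uᵀ := by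
    intro m
    have htr : (U * m * Uᵀ).trace = m.trace := by
      rw [Matrix.trace_mul_cycle, show Uᵀ * U * m = m by rw [hU2]; simp]
    unfold dev
    rw [htr, Matrix.mul_sub, Matrix.sub_mul]
    congr 1
    rw [Matrix.mul_smul, Matrix.smul_mul, Matrix.mul_one, hU1]
  -- generators correspond
  have hTapp : ∀ m : M3, T m = U * m * Uᵀ := fun m => rfl
  have hmulT : ∀ x y : M3, (U * x * Uᵀ) * (U * y * Uᵀ) = U * (x * y) * Uᵀ := by
    intro x y
    calc (U * x * Uᵀ) * (U * y * Uᵀ) = U * x * (Uᵀ * U) * y * Uᵀ := by noncomm_ring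
    _ = U * (x * y) * Uᵀ := by rw [hU2]; noncomm_ring
  have htrT : ∀ m : M3, (U * m * Uᵀ).trace = m.trace := by
    intro m
    rw [Matrix.trace_mul_cycle, show Uᵀ * U * m = m by rw [hU2]; simp]
  have hgen : (![dev a, dev b, dev (a ^ 2), dev (a * b + b * a),
         dev ((a * b - b * a) ^ 2)] : Fin 5 → M3)
      = T ∘ (![dev A, dev B, dev (A ^ 2), dev (A * B + B * A),
         dev ((A * B - B * A) ^ 2)] : Fin 5 → M3) := by
    have k2 : a ^ 2 = U * A ^ 2 * Uᵀ := by
      rw [pow_two, pow_two, hspec, hmulT]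
    have k3 : a * b + b * a = U * (A * B + B * A) * Uᵀ := by
      rw [hspec, hbB, hmulT, hmulT, ← Matrix.add_mul, ← Matrix.mul_add]
    have k4 : (a * b - b * a) ^ 2 = U * ((A * B - B * A) ^ 2) * Uᵀ := by
      have hsub : a * b - b * a = U * (A * B - B * A) * Uᵀ := by
        rw [hspec, hbB, hmulT, hmulT, ← Matrix.sub_mul, ← Matrix.mul_sub]
      rw [pow_two, pow_two, hsub, hmulT]
    funext k
    fin_cases k
    · show dev a = U * dev A * Uᵀ
      rw [hspec, hdevT]
    · show dev b = U * dev B * Uᵀ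
      rw [hbB, hdevT]
    · show dev (a ^ 2) = U * dev (A ^ 2) * Uᵀ
      rw [k2, hdevT]
    · show dev (a * b + b * a) = U * dev (A * B + B * A) * Uᵀ
      rw [k3, hdevT]
    · show dev ((a * b - b * a) ^ 2) = U * dev ((A * B - B * A) ^ 2) * Uᵀ
      rw [k4, hdevT]
  rw [hgen]
  constructor
  · exact (hcore.1).map' T hTinj
  · have himg : Set.range (T ∘ (![dev A, dev B, dev (A ^ 2), dev (A * B + B * A),
         dev ((A * B - B * A) ^ 2)] : Fin 5 → M3))
        = T '' Set.range (![dev A, dev B, dev (A ^ 2), dev (A * B + B * A),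
         dev ((A * B - B * A) ^ 2)] : Fin 5 → M3) := Set.range_comp _ _
    rw [himg, Submodule.span_image, Submodule.map_coe, hcore.2]
    ext m
    constructor
    · rintro ⟨x, ⟨hxs, hxt⟩, rfl⟩
      refine ⟨?_, by rw [hTapp, htrT, hxt]⟩
      show (T x)ᵀ = T x
      rw [hTapp, Matrix.transpose_mul, Matrix.transpose_mul, Matrix.transpose_transpose,
        hxs.eq, Matrix.mul_assoc]
    · rintro ⟨hms, hmt⟩
      refine ⟨Uᵀ * m * U, ⟨?_, ?_⟩, ?_⟩
      · show (Uᵀ * m * U)ᵀ = Uᵀ * m * U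
        rw [Matrix.transpose_mul, Matrix.transpose_mul, Matrix.transpose_transpose,
          hms.eq, Matrix.mul_assoc]
      · rw [Matrix.trace_mul_cycle, show U * Uᵀ * m = m by rw [hU1]; simp]
        exact hmt
      · rw [hTapp]
        calc U * (Uᵀ * m * U) * Uᵀ = (U * Uᵀ) * m * (U * Uᵀ) := by noncomm_ring
        _ = m := by rw [hU1]; simp
end reduction
end
end
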